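/- Let Σ be a finite alphabet, c ≥ 1 an integer, and S ⊆ Σ^c a nonempty finite set of keys, where each key x = (x₁,…,x_c) is identified with its set of position characters {(1,x₁),…,(c,x_c)} ⊆ {1,…,c} × Σ. Let w : Σ^c → ℝ_{≥0} be a weight function, and let A = {(i, x_i) : x ∈ S, 1 ≤ i ≤ c} be the set of position characters occurring in keys of S, with r = |A|. Then there exists an enumeration α₁,…,α_r of A such that for every i ∈ {1,…,r}, the group G_i = {x ∈ S : α_i ∈ x and x ⊆ {α₁,…,α_i}} satisfies Σ_{x∈G_i} w(x) ≤ (max_{x∈S} w(x))^{1/c} · (Σ_{x∈S} w(x))^{1−1/c}. -/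

import Mathlib

open Finset
open scoped BigOperators Classical

noncomputable section

/-- The set of position characters of a key `x ∈ Σ^c`, namely `{(1,x₁), …, (c,x_c)}`. -/
def posChars {Sig : Type*} [DecidableEq Sig] {c : ℕ} (x : Fin c → Sig) :
    Finset (Fin c × Sig) :=
  Finset.univ.image (fun i : Fin c => (i, x i))

lemma mem_posChars {Sig : Type*} [DecidableEq Sig] {c : ℕ} {x : Fin c → Sig}
    {p : Fin c × Sig} : p ∈ posChars x ↔ x p.1 = p.2 := by
  obtain ⟨i, a⟩ := p
  simp only [posChars, Finset.mem_image, Finset.mem_univ, true_and, Prod.mk.injEq]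
  constructor
  · rintro ⟨j, rfl, rfl⟩; rfl
  · rintro rfl; exact ⟨i, rfl, rfl⟩

lemma hT0 {Sig : Type} [Fintype Sig] [DecidableEq Sig] {c : ℕ}
    (S : Finset (Fin c → Sig)) (hS : S.Nonempty)
    (w : (Fin c → Sig) → ℝ) (hw : ∀ x, 0 ≤ w x) :
    0 ≤ (S.sup' hS w) ^ ((1 : ℝ) / c) * (∑ x ∈ S, w x) ^ (1 - (1 : ℝ) / c) := by
  obtain ⟨x0, hx0⟩ := hS.exists_mem
  have hM : 0 ≤ S.sup' hS w := le_trans (hw x0) (Finset.le_sup' w hx0)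
  have hW : 0 ≤ ∑ x ∈ S, w x := Finset.sum_nonneg fun x _ => hw x
  positivity

/-- Key counting lemma: in any nonempty `S' ⊆ S` there is a position character whose
group within `S'` has weight at most `T`. -/
lemma exists_good_char {Sig : Type} [Fintype Sig] [DecidableEq Sig] {c : ℕ} (hc : 1 ≤ c)
    (S : Finset (Fin c → Sig)) (hS : S.Nonempty)
    (w : (Fin c → Sig) → ℝ) (hw : ∀ x, 0 ≤ w x)
    (S' : Finset (Fin c → Sig)) (hsub : S' ⊆ S) (hS' : S'.Nonempty) :
    ∃ a ∈ S'.biUnion posChars,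
      ∑ x ∈ S'.filter (fun x => a ∈ posChars x), w x ≤
        (S.sup' hS w) ^ ((1 : ℝ) / c) * (∑ x ∈ S, w x) ^ (1 - (1 : ℝ) / c) := by
  classical
  set M := S.sup' hS w with hMdef
  set W := ∑ x ∈ S, w x with hWdef
  set T := M ^ ((1 : ℝ) / c) * W ^ (1 - (1 : ℝ) / c) with hTdef
  set W' := ∑ x ∈ S', w x with hW'def
  have hcne : (c:ℝ) ≠ 0 := by
    have : c ≠ 0 := by omega
    exact_mod_cast this
  obtain ⟨x0, hx0⟩ := hS'
  have hM0 : 0 ≤ M := le_trans (hw x0) (Finset.le_sup' w (hsub hx0))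
  have hW'0 : 0 ≤ W' := Finset.sum_nonneg fun x _ => hw x
  have hWW' : W' ≤ W :=
    Finset.sum_le_sum_of_subset_of_nonneg hsub (fun x _ _ => hw x)
  have hT0' : (0:ℝ) ≤ T := hT0 S hS w hw
  have ha0 : ((⟨0, hc⟩ : Fin c), x0 ⟨0, hc⟩) ∈ S'.biUnion posChars := by
    refine Finset.mem_biUnion.mpr ⟨x0, hx0, ?_⟩
    exact mem_posChars.mpr rfl
  by_cases hWT : W' ≤ T
  · refine ⟨_, ha0, ?_⟩
    refine le_trans ?_ hWT
    exact Finset.sum_le_sum_of_subset_of_nonneg (Finset.filter_subset _ _)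
      (fun x _ _ => hw x)
  · -- contradiction setup
    push_neg at hWT
    by_contra hcon
    push_neg at hcon
    have hW'pos : 0 < W' := lt_of_le_of_lt hT0' hWT
    have hMpos : 0 < M := by
      by_contra hM'
      push_neg at hM'
      have : W' ≤ 0 := Finset.sum_nonpos fun x hx =>
        le_trans (Finset.le_sup' w (hsub hx)) hM'
      linarith
    have hWpos : 0 < W := by
      obtain ⟨y, hy, hyM⟩ := Finset.exists_mem_eq_sup' hS w
      have h1 : M = w y := hyM
      have h2 : w y ≤ W := Finset.single_le_sum (fun x _ => hw x) hy
      linarith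
    have hTpos : 0 < T := by positivity
    -- T^c = M * W^(c-1)
    have hTc : T ^ c = M * W ^ (c - 1) := by
      have h1 : (M ^ ((1:ℝ)/c)) ^ c = M := by
        rw [← Real.rpow_natCast (M ^ ((1:ℝ)/c)) c, ← Real.rpow_mul hM0]
        rw [one_div_mul_cancel hcne, Real.rpow_one]
      have h2 : (W ^ (1 - (1:ℝ)/c)) ^ c = W ^ (c - 1) := by
        rw [← Real.rpow_natCast (W ^ (1 - (1:ℝ)/c)) c, ← Real.rpow_mul hWpos.le]
        have : (1 - (1:ℝ)/c) * c = ((c - 1 : ℕ) : ℝ) := by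
          rw [Nat.cast_sub hc, Nat.cast_one]
          field_simp
        rw [this, Real.rpow_natCast]
      rw [hTdef, mul_pow, h1, h2]
    -- groups by position/character
    set D : Fin c → Finset Sig := fun i => S'.image (fun x => x i) with hD
    have hpart : ∀ i : Fin c, ∀ a ∈ D i,
        T < ∑ x ∈ S'.filter (fun x => x i = a), w x := by
      intro i a ha
      obtain ⟨y, hy, hya⟩ := Finset.mem_image.mp ha
      have hmem : ((i, a) : Fin c × Sig) ∈ S'.biUnion posChars :=
        Finset.mem_biUnion.mpr ⟨y, hy, mem_posChars.mpr hya⟩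
      have := hcon (i, a) hmem
      have heq : S'.filter (fun x => (i, a) ∈ posChars x)
          = S'.filter (fun x => x i = a) := by
        apply Finset.filter_congr
        intro x _
        simp [mem_posChars]
      rw [heq] at this
      exact this
    have hDne : ∀ i : Fin c, (D i).Nonempty := fun i => ⟨x0 i, Finset.mem_image_of_mem _ hx0⟩
    have hcard : ∀ i : Fin c, ((D i).card : ℝ) * T < W' := by
      intro i
      have hsum : ∑ a ∈ D i, ∑ x ∈ S'.filter (fun x => x i = a), w x = W' := by
        exact Finset.sum_fiberwise_of_maps_to (fun x hx => Finset.mem_image_of_mem _ hx) w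
      calc ((D i).card : ℝ) * T = ∑ _a ∈ D i, T := by
            rw [Finset.sum_const, nsmul_eq_mul]
        _ < ∑ a ∈ D i, ∑ x ∈ S'.filter (fun x => x i = a), w x :=
            Finset.sum_lt_sum_of_nonempty (hDne i) (fun a ha => hpart i a ha)
        _ = W' := hsum
    -- |S'| ≤ ∏ |D i|
    have hcardS' : (S'.card : ℝ) ≤ ∏ i : Fin c, ((D i).card : ℝ) := by
      have hsubpi : S' ⊆ Fintype.piFinset D := by
        intro x hx
        exact Fintype.mem_piFinset.mpr fun i => Finset.mem_image_of_mem _ hx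
      have := Finset.card_le_card hsubpi
      rw [Fintype.card_piFinset] at this
      calc (S'.card : ℝ) ≤ ((∏ i : Fin c, (D i).card : ℕ) : ℝ) := by exact_mod_cast this
        _ = ∏ i : Fin c, ((D i).card : ℝ) := by push_cast; ring
    have hW'card : W' ≤ (S'.card : ℝ) * M := by
      have := Finset.sum_le_card_nsmul S' w M (fun x hx => Finset.le_sup' w (hsub hx))
      rwa [nsmul_eq_mul] at this
    -- strict product inequality
    have hprod : ∏ i : Fin c, (((D i).card : ℝ) * T) < ∏ _i : Fin c, W' := by
      apply Finset.prod_lt_prod_of_nonempty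
      · intro i _
        have : 0 < ((D i).card : ℝ) := by exact_mod_cast (hDne i).card_pos
        positivity
      · intro i _
        exact hcard i
      · exact Finset.univ_nonempty_iff.mpr ⟨⟨0, hc⟩⟩
    have hprodW : ∏ _i : Fin c, W' = W' ^ c := by
      rw [Finset.prod_const, Finset.card_univ, Fintype.card_fin]
    have hprodT : ∏ i : Fin c, (((D i).card : ℝ) * T)
        = (∏ i : Fin c, ((D i).card : ℝ)) * T ^ c := by
      rw [Finset.prod_mul_distrib, Finset.prod_const, Finset.card_univ, Fintype.card_fin]
    -- chain
    have hchain1 : W' * T ^ c ≤ M * (∏ i : Fin c, ((D i).card : ℝ)) * T ^ c := by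
      have h1 : W' ≤ M * ∏ i : Fin c, ((D i).card : ℝ) := by
        calc W' ≤ (S'.card : ℝ) * M := hW'card
          _ ≤ (∏ i : Fin c, ((D i).card : ℝ)) * M :=
            mul_le_mul_of_nonneg_right hcardS' hM0
          _ = M * ∏ i : Fin c, ((D i).card : ℝ) := mul_comm _ _
      exact mul_le_mul_of_nonneg_right h1 (by positivity)
    have hchain2 : M * (∏ i : Fin c, ((D i).card : ℝ)) * T ^ c < M * W' ^ c := by
      calc M * (∏ i : Fin c, ((D i).card : ℝ)) * T ^ c
          = M * ((∏ i : Fin c, ((D i).card : ℝ)) * T ^ c) := by ring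
        _ = M * ∏ i : Fin c, (((D i).card : ℝ) * T) := by rw [hprodT]
        _ < M * W' ^ c := by
            apply mul_lt_mul_of_pos_left _ hMpos
            rw [← hprodW]; exact hprod
    have hchain3 : M * W' ^ c ≤ W' * T ^ c := by
      have hcsplit : W' ^ c = W' ^ (c - 1) * W' := by
        conv_lhs => rw [show c = (c - 1) + 1 by omega]
        rw [pow_succ]
      rw [hcsplit, hTc]
      calc M * (W' ^ (c-1) * W') ≤ M * (W ^ (c-1) * W') := by
            apply mul_le_mul_of_nonneg_left _ hM0
            exact mul_le_mul_of_nonneg_right (pow_le_pow_left₀ hW'0 hWW' _) hW'0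
        _ = W' * (M * W ^ (c-1)) := by ring
    linarith

/-- Inductive construction of the enumeration as a list (first element = α₁). -/
lemma exists_good_list {Sig : Type} [Fintype Sig] [DecidableEq Sig] {c : ℕ} (hc : 1 ≤ c)
    (S : Finset (Fin c → Sig)) (hS : S.Nonempty)
    (w : (Fin c → Sig) → ℝ) (hw : ∀ x, 0 ≤ w x)
    (B : Finset (Fin c × Sig)) :
    ∃ L : List (Fin c × Sig), L.Nodup ∧ L.toFinset = B ∧
      ∀ i (hi : i < L.length),
        ∑ x ∈ S.filter (fun x =>
            L.get ⟨i, hi⟩ ∈ posChars x ∧ posChars x ⊆ (L.take (i+1)).toFinset), w x ≤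
          (S.sup' hS w) ^ ((1 : ℝ) / c) * (∑ x ∈ S, w x) ^ (1 - (1 : ℝ) / c) := by
  classical
  induction B using Finset.strongInduction with
  | _ B ih =>
    rcases Finset.eq_empty_or_nonempty B with rfl | hBne
    · exact ⟨[], by simp, by simp, by simp⟩
    · -- find a good last element β ∈ B
      have hβ : ∃ β ∈ B,
          ∑ x ∈ S.filter (fun x => β ∈ posChars x ∧ posChars x ⊆ B), w x ≤
            (S.sup' hS w) ^ ((1 : ℝ) / c) * (∑ x ∈ S, w x) ^ (1 - (1 : ℝ) / c) := by
        set S' := S.filter (fun x => posChars x ⊆ B) with hS'def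
        by_cases hcover : B ⊆ S'.biUnion posChars
        · have hS'ne : S'.Nonempty := by
            obtain ⟨b, hb⟩ := hBne
            obtain ⟨x, hx, _⟩ := Finset.mem_biUnion.mp (hcover hb)
            exact ⟨x, hx⟩
          obtain ⟨a, haA, ha⟩ := exists_good_char hc S hS w hw S'
            (Finset.filter_subset _ _) hS'ne
          have haB : a ∈ B := by
            obtain ⟨x, hx, hax⟩ := Finset.mem_biUnion.mp haA
            exact (Finset.mem_filter.mp hx).2 hax
          refine ⟨a, haB, ?_⟩
          have heq : S.filter (fun x => a ∈ posChars x ∧ posChars x ⊆ B)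
              = S'.filter (fun x => a ∈ posChars x) := by
            rw [hS'def, Finset.filter_filter]
            apply Finset.filter_congr
            intro x _
            tauto
          rw [heq]
          exact ha
        · obtain ⟨β, hβB, hβnot⟩ := Finset.not_subset.mp hcover
          refine ⟨β, hβB, ?_⟩
          have heq : S.filter (fun x => β ∈ posChars x ∧ posChars x ⊆ B) = ∅ := by
            rw [Finset.filter_eq_empty_iff]
            rintro x hx ⟨hβx, hxB⟩
            exact hβnot (Finset.mem_biUnion.mpr
              ⟨x, Finset.mem_filter.mpr ⟨hx, hxB⟩, hβx⟩)
          rw [heq, Finset.sum_empty]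
          exact hT0 S hS w hw
      obtain ⟨β, hβB, hβ⟩ := hβ
      obtain ⟨L', hnd', htf', hgr'⟩ := ih (B.erase β) (Finset.erase_ssubset hβB)
      have huni : (L' ++ [β]).toFinset = B := by
        simp only [List.toFinset_append, List.toFinset_cons, List.toFinset_nil,
          LawfulSingleton.insert_empty_eq, htf']
        ext p
        simp only [Finset.mem_union, Finset.mem_erase, Finset.mem_singleton]
        constructor
        · rintro (⟨_, hp⟩ | rfl) <;> [exact hp; exact hβB]
        · intro hp
          by_cases hpβ : p = β
          · exact Or.inr hpβ
          · exact Or.inl ⟨hpβ, hp⟩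
      refine ⟨L' ++ [β], ?_, huni, ?_⟩
      · have hβL' : β ∉ L' := by
          rw [← List.mem_toFinset, htf']
          exact Finset.notMem_erase _ _
        simp [List.nodup_append, hnd', hβL']
        intro a b hab heq
        exact hβL' (heq ▸ hab)
      · intro i hi
        have hlen : (L' ++ [β]).length = L'.length + 1 := by simp
        rcases lt_or_eq_of_le (Nat.lt_succ_iff.mp (hlen ▸ hi)) with hi' | hi'
        · -- i < L'.length : use induction hypothesis
          have hget : (L' ++ [β]).get ⟨i, hi⟩ = L'.get ⟨i, hi'⟩ := by
            simp [List.getElem_append_left hi']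
          have htake : (L' ++ [β]).take (i+1) = L'.take (i+1) := by
            rw [List.take_append_of_le_length (by omega)]
          rw [hget, htake]
          exact hgr' i hi'
        · -- i = L'.length : last element β
          have hget : (L' ++ [β]).get ⟨i, hi⟩ = β := by
            subst hi'
            simp
          have htake : ((L' ++ [β]).take (i+1)).toFinset = B := by
            have h : (L' ++ [β]).take (i+1) = L' ++ [β] := by
              apply List.take_of_length_le
              omega
            rw [h, huni]
          rw [hget, htake]
          exact hβ

/-- Ordering of position characters with small weighted groups: there is an
enumeration `α₁, …, α_r` of the position characters of `S` such that every group
`G_i = {x ∈ S : α_i ∈ x ⊆ {α₁,…,α_i}}` has total weight at most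
`(max_{x∈S} w(x))^{1/c} · (Σ_{x∈S} w(x))^{1−1/c}`. -/
theorem ordering_with_small_groups
    (Sig : Type) [Fintype Sig] [DecidableEq Sig] (c : ℕ) (hc : 1 ≤ c)
    (S : Finset (Fin c → Sig)) (hS : S.Nonempty)
    (w : (Fin c → Sig) → ℝ) (hw : ∀ x, 0 ≤ w x) :
    ∃ α : Fin (S.biUnion posChars).card → Fin c × Sig,
      Function.Injective α ∧
      (∀ i, α i ∈ S.biUnion posChars) ∧
      (∀ p ∈ S.biUnion posChars, ∃ i, α i = p) ∧
      ∀ i : Fin (S.biUnion posChars).card,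
        ∑ x ∈ S.filter (fun x =>
            α i ∈ posChars x ∧ ∀ p ∈ posChars x, ∃ j, j ≤ i ∧ α j = p), w x ≤
          (S.sup' hS w) ^ ((1 : ℝ) / c) * (∑ x ∈ S, w x) ^ (1 - (1 : ℝ) / c) := by
  classical
  obtain ⟨L, hnd, htf, hgr⟩ := exists_good_list hc S hS w hw (S.biUnion posChars)
  have hlen : L.length = (S.biUnion posChars).card := by
    rw [← htf, List.toFinset_card_of_nodup hnd]
  refine ⟨fun i => L.get (Fin.cast hlen.symm i), ?_, ?_, ?_, ?_⟩
  · exact (List.nodup_iff_injective_get.mp hnd).comp (Fin.cast_injective _)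
  · intro i
    have h : L.get (Fin.cast hlen.symm i) ∈ L.toFinset :=
      List.mem_toFinset.mpr (List.get_mem _ _)
    rwa [htf] at h
  · intro p hp
    rw [← htf, List.mem_toFinset] at hp
    obtain ⟨n, hn⟩ := List.mem_iff_get.mp hp
    exact ⟨Fin.cast hlen n, by simpa using hn⟩
  · intro i
    have hi' : (i : ℕ) < L.length := by omega
    have hfe : S.filter (fun x => L.get (Fin.cast hlen.symm i) ∈ posChars x ∧
          ∀ p ∈ posChars x, ∃ j, j ≤ i ∧ L.get (Fin.cast hlen.symm j) = p)
        = S.filter (fun x => L.get ⟨i, hi'⟩ ∈ posChars x ∧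
          posChars x ⊆ (L.take ((i:ℕ)+1)).toFinset) := by
      apply Finset.filter_congr
      intro x _
      have hgeteq : L.get (Fin.cast hlen.symm i) = L.get ⟨i, hi'⟩ := rfl
      rw [hgeteq]
      refine Iff.of_eq (congrArg _ ?_)
      refine propext ?_
      constructor
      · intro h p hpx
        obtain ⟨j, hji, hjp⟩ := h p hpx
        have hji' : (j : ℕ) ≤ (i : ℕ) := hji
        have hjlt : (j:ℕ) < (L.take ((i:ℕ)+1)).length := by
          rw [List.length_take]; omega
        have hg : (L.take ((i:ℕ)+1)).get ⟨j, hjlt⟩ = L.get (Fin.cast hlen.symm j) := by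
          simp [List.getElem_take]
        rw [List.mem_toFinset, ← hjp, ← hg]
        exact List.get_mem _ _
      · intro h p hpx
        have hmem := h hpx
        rw [List.mem_toFinset] at hmem
        obtain ⟨m, hm, hmp⟩ := List.mem_iff_getElem.mp hmem
        rw [List.length_take] at hm
        have hmi : m ≤ (i:ℕ) := by omega
        have hmL : m < L.length := by omega
        refine ⟨⟨m, by omega⟩, ?_, ?_⟩
        · exact hmi
        · rw [← hmp]
          simp [List.getElem_take]
    rw [hfe]
    exact hgr i hi'
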